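/- Uniqueness for the graph wave equation: if u₁ and u₂ both solve ∂_t²u − Δ_Ω u = f on (0,∞)×Ω° with u(0,·)=g, ∂_t u(0,·)=h on Ω° and u=0 on [0,∞)×∂Ω, and Ω is connected, then u₁ = u₂ on [0,∞)×Ω. -/

import Mathlib

open Finset

/-- Graph (Dirichlet) Laplacian. -/
noncomputable def graphLap {V : Type*} [Fintype V] (ω : V → V → ℝ) (μ : V → ℝ)
    (u : V → ℝ) (x : V) : ℝ :=
  (1 / μ x) * ∑ y, ω x y * (u y - u x)

/-- Energy argument: a solution of the homogeneous wave equation with zero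
initial data and zero boundary velocity vanishes identically. -/
theorem wave_energy_aux {V : Type*} [Fintype V]
    (ω : V → V → ℝ) (μ : V → ℝ)
    (hsymm : ∀ x y, ω x y = ω y x) (hnonneg : ∀ x y, 0 ≤ ω x y) (hμ : ∀ x, 0 < μ x)
    (Ωo : Finset V) (w dw ddw : ℝ → V → ℝ)
    (hdw : ∀ x, ∀ t ∈ Set.Ici (0:ℝ), HasDerivWithinAt (fun s => w s x) (dw t x) (Set.Ici 0) t)
    (hddw : ∀ x, ∀ t ∈ Set.Ici (0:ℝ), HasDerivWithinAt (fun s => dw s x) (ddw t x) (Set.Ici 0) t)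
    (hwave : ∀ t, 0 < t → ∀ x ∈ Ωo, μ x * ddw t x = ∑ y, ω x y * (w t y - w t x))
    (hw00 : ∀ x, w 0 x = 0) (hdw00 : ∀ x, dw 0 x = 0)
    (hbd : ∀ t, 0 ≤ t → ∀ x, x ∉ Ωo → dw t x = 0) :
    ∀ t, 0 ≤ t → ∀ x, w t x = 0 := by
  set E : ℝ → ℝ := fun t => ∑ x, μ x * (dw t x)^2
      + (1/2) * ∑ x, ∑ y, ω x y * (w t y - w t x)^2 with hE_def
  set E' : ℝ → ℝ := fun t => ∑ x, μ x * (2 * dw t x * ddw t x)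
      + (1/2) * ∑ x, ∑ y, ω x y * (2 * (w t y - w t x) * (dw t y - dw t x)) with hE'_def
  have hE : ∀ t ∈ Set.Ici (0:ℝ), HasDerivWithinAt E (E' t) (Set.Ici 0) t := by
    intro t ht
    have h1 : HasDerivWithinAt (fun s => ∑ x, μ x * (dw s x)^2)
        (∑ x, μ x * (2 * dw t x * ddw t x)) (Set.Ici 0) t := by
      apply HasDerivWithinAt.fun_sum
      intro x _
      have := ((hddw x t ht).pow 2).const_mul (μ x)
      simpa [mul_assoc, mul_comm, mul_left_comm] using this
    have h2 : HasDerivWithinAt (fun s => (1/2 : ℝ) * ∑ x, ∑ y, ω x y * (w s y - w s x)^2)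
        ((1/2) * ∑ x, ∑ y, ω x y * (2 * (w t y - w t x) * (dw t y - dw t x)))
        (Set.Ici 0) t := by
      apply HasDerivWithinAt.const_mul
      apply HasDerivWithinAt.fun_sum
      intro x _
      apply HasDerivWithinAt.fun_sum
      intro y _
      have hd : HasDerivWithinAt (fun s => w s y - w s x) (dw t y - dw t x) (Set.Ici 0) t :=
        (hdw y t ht).sub (hdw x t ht)
      have := (hd.pow 2).const_mul (ω x y)
      simpa [mul_assoc, mul_comm, mul_left_comm] using this
    exact h1.add h2
  have hE'0 : ∀ t, 0 < t → E' t = 0 := by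
    intro t ht
    set S : ℝ := ∑ x, dw t x * ∑ y, ω x y * (w t y - w t x) with hS
    have hswap : ∑ x, ∑ y, ω x y * ((w t y - w t x) * dw t y) = -S := by
      rw [hS]
      conv_lhs => rw [Finset.sum_comm]
      rw [← Finset.sum_neg_distrib]
      apply Finset.sum_congr rfl; intro a _
      rw [Finset.mul_sum, ← Finset.sum_neg_distrib]
      apply Finset.sum_congr rfl; intro b _
      rw [hsymm b a]; ring
    have e2 : ∑ x, ∑ y, ω x y * ((w t y - w t x) * dw t x) = S := by
      rw [hS]
      apply Finset.sum_congr rfl; intro x _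
      rw [Finset.mul_sum]
      apply Finset.sum_congr rfl; intro y _; ring
    have hdouble : ∑ x, ∑ y, ω x y * (2 * (w t y - w t x) * (dw t y - dw t x)) = -4 * S := by
      have e1 : ∀ x y : V, ω x y * (2 * (w t y - w t x) * (dw t y - dw t x))
          = 2 * (ω x y * ((w t y - w t x) * dw t y))
            - 2 * (ω x y * ((w t y - w t x) * dw t x)) := by
        intro x y; ring
      simp only [e1, Finset.sum_sub_distrib, ← Finset.mul_sum]
      rw [hswap, e2]; ring
    have hEeq : E' t = 2 * ∑ x, dw t x * (μ x * ddw t x - ∑ y, ω x y * (w t y - w t x)) := by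
      have h5 : ∑ x, μ x * (2 * dw t x * ddw t x) = 2 * ∑ x, dw t x * (μ x * ddw t x) := by
        rw [Finset.mul_sum]
        apply Finset.sum_congr rfl; intro x _; ring
      have expand : ∑ x, dw t x * (μ x * ddw t x - ∑ y, ω x y * (w t y - w t x))
          = (∑ x, dw t x * (μ x * ddw t x)) - S := by
        rw [hS, ← Finset.sum_sub_distrib]
        apply Finset.sum_congr rfl; intro x _; ring
      simp only [hE'_def]
      rw [hdouble, h5, expand]
      ring
    rw [hEeq]
    rw [Finset.mul_sum]
    apply Finset.sum_eq_zero
    intro x _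
    by_cases hx : x ∈ Ωo
    · rw [hwave t ht x hx, sub_self, mul_zero, mul_zero]
    · rw [hbd t ht.le x hx]; ring
  have hcont : ContinuousOn E (Set.Ici 0) := fun t ht => (hE t ht).continuousWithinAt
  have hmem : ∀ t ∈ interior (Set.Ici (0:ℝ)), HasDerivAt E (E' t) t := by
    intro t ht
    rw [interior_Ici] at ht
    exact (hE t (Set.mem_Ici.2 (le_of_lt ht))).hasDerivAt (Ici_mem_nhds ht)
  have hEconst : ∀ t, 0 ≤ t → E t = E 0 := by
    intro t ht
    have hdiff : DifferentiableOn ℝ E (interior (Set.Ici (0:ℝ))) :=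
      fun s hs => ((hmem s hs).differentiableAt).differentiableWithinAt
    have hderiv0 : ∀ s ∈ interior (Set.Ici (0:ℝ)), deriv E s = 0 := by
      intro s hs
      rw [(hmem s hs).deriv]
      exact hE'0 s (by rwa [interior_Ici] at hs)
    have hmono : MonotoneOn E (Set.Ici 0) :=
      monotoneOn_of_deriv_nonneg (convex_Ici 0) hcont hdiff
        (fun s hs => le_of_eq (hderiv0 s hs).symm)
    have hanti : AntitoneOn E (Set.Ici 0) :=
      antitoneOn_of_deriv_nonpos (convex_Ici 0) hcont hdiff
        (fun s hs => le_of_eq (hderiv0 s hs))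
    exact le_antisymm (hanti Set.self_mem_Ici ht ht) (hmono Set.self_mem_Ici ht ht)
  have hE0 : E 0 = 0 := by
    simp only [hE_def]
    simp [hw00, hdw00]
  have hdwz : ∀ t, 0 ≤ t → ∀ x, dw t x = 0 := by
    intro t ht x
    have hEt : E t = 0 := (hEconst t ht).trans hE0
    have hB : 0 ≤ (1/2:ℝ) * ∑ x, ∑ y, ω x y * (w t y - w t x)^2 :=
      mul_nonneg (by norm_num)
        (Finset.sum_nonneg fun x _ => Finset.sum_nonneg fun y _ =>
          mul_nonneg (hnonneg x y) (sq_nonneg _))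
    have hA : ∀ x ∈ Finset.univ (α := V), 0 ≤ μ x * (dw t x)^2 :=
      fun x _ => mul_nonneg (hμ x).le (sq_nonneg _)
    have h1 : ∑ x, μ x * (dw t x)^2 = 0 := by
      have hAnn : 0 ≤ ∑ x, μ x * (dw t x)^2 := Finset.sum_nonneg hA
      have : ∑ x, μ x * (dw t x)^2 + (1/2) * ∑ x, ∑ y, ω x y * (w t y - w t x)^2 = 0 := by
        rw [← hEt]
      linarith
    have := (Finset.sum_eq_zero_iff_of_nonneg hA).1 h1 x (Finset.mem_univ x)
    have h2 : (dw t x)^2 = 0 := by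
      rcases mul_eq_zero.1 this with h | h
      · exact absurd h (hμ x).ne'
      · exact h
    exact sq_eq_zero_iff.1 h2
  intro t ht x
  have hcont' : ContinuousOn (fun s => w s x) (Set.Icc 0 t) := fun s hs =>
    ((hdw x s hs.1).continuousWithinAt).mono Set.Icc_subset_Ici_self
  have hder : ∀ s ∈ Set.Ico 0 t, HasDerivWithinAt (fun s => w s x) 0 (Set.Ici s) s := by
    intro s hs
    have := (hdw x s hs.1).mono (Set.Ici_subset_Ici.2 hs.1)
    rwa [hdwz s hs.1 x] at this
  have := constant_of_has_deriv_right_zero hcont' hder t (Set.right_mem_Icc.2 ht)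
  rw [this, hw00 x]

/-- Uniqueness for the graph wave equation with Dirichlet boundary conditions on a
finite connected domain: two solutions with the same data coincide on `[0,∞) × Ω`. -/
theorem wave_uniqueness {V : Type*} [Fintype V] [DecidableEq V]
    (ω : V → V → ℝ) (μ : V → ℝ)
    (hsymm : ∀ x y, ω x y = ω y x) (hnonneg : ∀ x y, 0 ≤ ω x y)
    (hμ : ∀ x, 0 < μ x)
    (Ω bd Ωo : Finset V)
    (hbd : ∀ x, x ∈ bd ↔ x ∈ Ω ∧ ∃ y, y ∉ Ω ∧ ω x y ≠ 0)
    (hΩo : Ωo = Ω \ bd) (hbdne : bd.Nonempty) (hΩone : Ωo.Nonempty)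
    (hconn : ∀ x ∈ Ω, ∀ y ∈ Ω,
      Relation.ReflTransGen (fun a b => a ∈ Ω ∧ b ∈ Ω ∧ ω a b ≠ 0) x y)
    (f : ℝ → V → ℝ) (g h : V → ℝ)
    (u₁ u₂ du₁ du₂ ddu₁ ddu₂ : ℝ → V → ℝ)
    (hderiv1₁ : ∀ x, ∀ t ∈ Set.Ici (0 : ℝ),
      HasDerivWithinAt (fun s => u₁ s x) (du₁ t x) (Set.Ici 0) t)
    (hderiv2₁ : ∀ x, ∀ t ∈ Set.Ici (0 : ℝ),
      HasDerivWithinAt (fun s => du₁ s x) (ddu₁ t x) (Set.Ici 0) t)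
    (hderiv1₂ : ∀ x, ∀ t ∈ Set.Ici (0 : ℝ),
      HasDerivWithinAt (fun s => u₂ s x) (du₂ t x) (Set.Ici 0) t)
    (hderiv2₂ : ∀ x, ∀ t ∈ Set.Ici (0 : ℝ),
      HasDerivWithinAt (fun s => du₂ s x) (ddu₂ t x) (Set.Ici 0) t)
    (hwave₁ : ∀ t, 0 < t → ∀ x ∈ Ωo, ddu₁ t x - graphLap ω μ (u₁ t) x = f t x)
    (hwave₂ : ∀ t, 0 < t → ∀ x ∈ Ωo, ddu₂ t x - graphLap ω μ (u₂ t) x = f t x)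
    (hinit₁ : ∀ x ∈ Ωo, u₁ 0 x = g x) (hinit₂ : ∀ x ∈ Ωo, u₂ 0 x = g x)
    (hinit₁' : ∀ x ∈ Ωo, du₁ 0 x = h x) (hinit₂' : ∀ x ∈ Ωo, du₂ 0 x = h x)
    (hbdry₁ : ∀ t, 0 ≤ t → ∀ x, x ∉ Ωo → u₁ t x = 0)
    (hbdry₂ : ∀ t, 0 ≤ t → ∀ x, x ∉ Ωo → u₂ t x = 0) :
    ∀ t, 0 ≤ t → ∀ x ∈ Ω, u₁ t x = u₂ t x := by
  have hdw : ∀ x, ∀ t ∈ Set.Ici (0:ℝ),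
      HasDerivWithinAt (fun s => u₁ s x - u₂ s x) (du₁ t x - du₂ t x) (Set.Ici 0) t :=
    fun x t ht => (hderiv1₁ x t ht).sub (hderiv1₂ x t ht)
  have hddw : ∀ x, ∀ t ∈ Set.Ici (0:ℝ),
      HasDerivWithinAt (fun s => du₁ s x - du₂ s x) (ddu₁ t x - ddu₂ t x) (Set.Ici 0) t :=
    fun x t ht => (hderiv2₁ x t ht).sub (hderiv2₂ x t ht)
  have hw0 : ∀ t, 0 ≤ t → ∀ x, x ∉ Ωo → u₁ t x - u₂ t x = 0 := by
    intro t ht x hx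
    rw [hbdry₁ t ht x hx, hbdry₂ t ht x hx, sub_self]
  have hdw0 : ∀ t, 0 ≤ t → ∀ x, x ∉ Ωo → du₁ t x - du₂ t x = 0 := by
    intro t ht x hx
    have h0 : HasDerivWithinAt (fun s => u₁ s x - u₂ s x) 0 (Set.Ici 0) t :=
      (hasDerivWithinAt_const t _ (0:ℝ)).congr (fun s hs => hw0 s hs x hx)
        (hw0 t ht x hx)
    have h1 := (hdw x t ht).derivWithin (uniqueDiffOn_Ici 0 t ht)
    rw [← h1, h0.derivWithin (uniqueDiffOn_Ici 0 t ht)]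
  have hwavew : ∀ t, 0 < t → ∀ x ∈ Ωo,
      μ x * (ddu₁ t x - ddu₂ t x) = ∑ y, ω x y * ((u₁ t y - u₂ t y) - (u₁ t x - u₂ t x)) := by
    intro t ht x hx
    have h1 := hwave₁ t ht x hx
    have h2 := hwave₂ t ht x hx
    have h3 : ddu₁ t x - ddu₂ t x = graphLap ω μ (u₁ t) x - graphLap ω μ (u₂ t) x := by
      linarith
    rw [h3]
    simp only [graphLap]
    have hμx : (μ x) ≠ 0 := (hμ x).ne'
    rw [mul_sub]
    rw [show μ x * (1 / μ x * ∑ y, ω x y * (u₁ t y - u₁ t x))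
        = ∑ y, ω x y * (u₁ t y - u₁ t x) by field_simp]
    rw [show μ x * (1 / μ x * ∑ y, ω x y * (u₂ t y - u₂ t x))
        = ∑ y, ω x y * (u₂ t y - u₂ t x) by field_simp]
    rw [← Finset.sum_sub_distrib]
    apply Finset.sum_congr rfl; intro y _; ring
  have hw00 : ∀ x, u₁ 0 x - u₂ 0 x = 0 := by
    intro x
    by_cases hx : x ∈ Ωo
    · rw [hinit₁ x hx, hinit₂ x hx, sub_self]
    · exact hw0 0 le_rfl x hx
  have hdw00 : ∀ x, du₁ 0 x - du₂ 0 x = 0 := by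
    intro x
    by_cases hx : x ∈ Ωo
    · rw [hinit₁' x hx, hinit₂' x hx, sub_self]
    · exact hdw0 0 le_rfl x hx
  have key := wave_energy_aux ω μ hsymm hnonneg hμ Ωo
    (fun t x => u₁ t x - u₂ t x) (fun t x => du₁ t x - du₂ t x)
    (fun t x => ddu₁ t x - ddu₂ t x)
    hdw hddw hwavew hw00 hdw00 hdw0
  intro t ht x _
  have h0 : u₁ t x - u₂ t x = 0 := key t ht x
  linarith
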